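/- arXiv:1906.07355 — 2 statements merged into one kernel-verified Lean document; each statement's English description precedes it below -/
import Mathlib

section
/- Let ψ, φ : ℕ → ℝ be nonnegative sequences with φ_0 = 0, and let η, γ, μ > 0. Suppose for all t that ψ_{t+1} ≥ (1 + ηγ) ψ_t − μ √(ψ_t² + φ_t²) and φ_{t+1} ≤ (1 + ηγ) φ_t + μ √(ψ_t² + φ_t²). Fix T with 4 μ T ≤ 1 and ψ_0 > 0. Then for all t ≤ T, φ_t ≤ 4 μ t ψ_t. -/
theorem stmt_3 (ψ φ : ℕ → ℝ) (η γ μ : ℝ) (T : ℕ)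
    (hψ : ∀ t, 0 ≤ ψ t) (hφ : ∀ t, 0 ≤ φ t)
    (hφ0 : φ 0 = 0) (hψ0 : 0 < ψ 0)
    (hη : 0 < η) (hγ : 0 < γ) (hμ : 0 < μ)
    (hrec1 : ∀ t < T, ψ (t + 1) ≥ (1 + η * γ) * ψ t - μ * Real.sqrt (ψ t ^ 2 + φ t ^ 2))
    (hrec2 : ∀ t < T, φ (t + 1) ≤ (1 + η * γ) * φ t + μ * Real.sqrt (ψ t ^ 2 + φ t ^ 2))
    (hT : ∀ t < T, 4 * μ * (t + 1 : ℝ) ≤ 1) :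
    ∀ t ≤ T, φ t ≤ 4 * μ * t * ψ t := by
  intro t htT
  induction t with
  | zero => simp [hφ0]
  | succ t ih =>
    have htT' : t < T := htT
    have ih' := ih (Nat.le_of_succ_le htT')
    set s := Real.sqrt (ψ t ^ 2 + φ t ^ 2) with hs
    have hs0 : 0 ≤ s := Real.sqrt_nonneg _
    have hsle : s ≤ ψ t + φ t := by
      rw [show ψ t + φ t = Real.sqrt ((ψ t + φ t) ^ 2) from
        (Real.sqrt_sq (add_nonneg (hψ t) (hφ t))).symm]
      exact Real.sqrt_le_sqrt (by nlinarith [hψ t, hφ t])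
    have h1 := hrec1 t htT'
    have h2 := hrec2 t htT'
    have hT' := hT t htT'
    have hcoef : (0:ℝ) ≤ 4 * μ * ((t : ℝ) + 1) := by positivity
    have hs2 : s ≤ 2 * ψ t := by nlinarith [hψ t, hμ.le]
    have A : 4 * μ * ((t : ℝ) + 1) * ((1 + η * γ) * ψ t - μ * s)
        ≤ 4 * μ * ((t : ℝ) + 1) * ψ (t + 1) := mul_le_mul_of_nonneg_left h1 hcoef
    have f4 : μ * s ≤ 2 * μ * ψ t := by nlinarith
    have f5 : 4 * μ * ((t : ℝ) + 1) * (μ * s) ≤ μ * s := by nlinarith [mul_nonneg hμ.le hs0]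
    have f6 : (1 + η * γ) * φ t ≤ (1 + η * γ) * (4 * μ * t * ψ t) :=
      mul_le_mul_of_nonneg_left ih' (by nlinarith)
    have f7 : (0:ℝ) ≤ η * γ * (μ * ψ t) := by nlinarith [hψ t, mul_nonneg (mul_nonneg hη.le hγ.le) (mul_nonneg hμ.le (hψ t))]
    push_cast
    nlinarith [h2, A, f4, f5, f6, f7]
end

section
/- Let f : ℝ^d → ℝ be twice differentiable with ρ-Lipschitz Hessian and β-Lipschitz gradient. Fix x and define for any point u the gradient step u⁺ = u − η∇f(u). Then for all u, w: ‖(w⁺ − u⁺) − (I − η∇²f(x))(w − u)‖ ≤ η ρ ‖w − u‖ (‖w − u‖ + ‖u − x‖). -/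
theorem stmt_9 (d : ℕ) (f : EuclideanSpace ℝ (Fin d) → ℝ) (ρ β η : ℝ)
    (hρ : 0 ≤ ρ) (hβ : 0 ≤ β) (hη : 0 < η)
    (hdiff : Differentiable ℝ f)
    (hdiff2 : Differentiable ℝ (gradient f))
    (hlipH : ∀ x y, ‖fderiv ℝ (gradient f) x - fderiv ℝ (gradient f) y‖ ≤ ρ * ‖x - y‖)
    (hlipG : ∀ x y, ‖gradient f x - gradient f y‖ ≤ β * ‖x - y‖)
    (x : EuclideanSpace ℝ (Fin d)) :
    ∀ u w, ‖((w - η • gradient f w) - (u - η • gradient f u)) -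
        ((w - u) - η • fderiv ℝ (gradient f) x (w - u))‖ ≤
      η * ρ * ‖w - u‖ * (‖w - u‖ + ‖u - x‖) := by
  intro u w
  set H := fderiv ℝ (gradient f) x with hH
  set g : EuclideanSpace ℝ (Fin d) → EuclideanSpace ℝ (Fin d) :=
    fun v => gradient f v - H v with hg
  have hgdiff : ∀ v, DifferentiableAt ℝ g v := fun v =>
    (hdiff2 v).sub (H.differentiable v)
  have hgderiv : ∀ v, fderiv ℝ g v = fderiv ℝ (gradient f) v - H := by
    intro v
    rw [hg]
    rw [fderiv_fun_sub (hdiff2 v) (H.differentiable v), H.fderiv]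
  -- bound on the segment
  have key : ‖g w - g u‖ ≤ (ρ * (‖w - u‖ + ‖u - x‖)) * ‖w - u‖ := by
    apply Convex.norm_image_sub_le_of_norm_fderiv_le
      (fun v _ => hgdiff v) _ (convex_segment u w)
      (left_mem_segment ℝ u w) (right_mem_segment ℝ u w)
    intro v hv
    rw [hgderiv v]
    calc ‖fderiv ℝ (gradient f) v - H‖ ≤ ρ * ‖v - x‖ := hlipH v x
      _ ≤ ρ * (‖w - u‖ + ‖u - x‖) := by
          apply mul_le_mul_of_nonneg_left _ hρ
          have hvu : ‖v - u‖ ≤ ‖w - u‖ := by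
            obtain ⟨a, b, ha, hb, hab, rfl⟩ := hv
            have : a • u + b • w - u = b • (w - u) := by
              have ha' : a = 1 - b := by linarith
              rw [ha']
              module
            rw [this, norm_smul]
            simpa using mul_le_of_le_one_left (norm_nonneg _) (by
              simp [abs_of_nonneg hb]; linarith)
          calc ‖v - x‖ = ‖(v - u) + (u - x)‖ := by rw [sub_add_sub_cancel]
            _ ≤ ‖v - u‖ + ‖u - x‖ := norm_add_le _ _
            _ ≤ ‖w - u‖ + ‖u - x‖ := by linarith
  have hrw : ((w - η • gradient f w) - (u - η • gradient f u)) -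
      ((w - u) - η • H (w - u)) = (-η) • (g w - g u) := by
    rw [hg]
    simp only [map_sub]
    module
  rw [hrw, norm_smul]
  simp only [norm_neg, Real.norm_eq_abs, abs_of_pos hη]
  calc η * ‖g w - g u‖ ≤ η * ((ρ * (‖w - u‖ + ‖u - x‖)) * ‖w - u‖) :=
        mul_le_mul_of_nonneg_left key hη.le
    _ = η * ρ * ‖w - u‖ * (‖w - u‖ + ‖u - x‖) := by ring
end
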